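/- Let X be a finite set and for each bit-string s with |s| ≤ p let f_s : X → {u ∈ ℕ^m : u ≤ C} be functions (componentwise order). Suppose given natural numbers y_{s,u} for each s and each u ≤ C, and ŷ_{s,v,w} for each s with |s| < p and vectors v, w with v + w ≤ C, satisfying: |X| = Σ_u y_{ε,u}; y_{s,u} = Σ{ ŷ_{s,v,w} : v + w = u } for |s| < p; y_{s0,v} = Σ{ ŷ_{s,v,w} : v + w ≤ C }; and y_{s1,w} = Σ{ ŷ_{s,v,w} : v + w ≤ C }. Then there exists a family of functions f_s : X → ℕ^m such that |f_s^{-1}(u)| = y_{s,u} for all s, u, and f_{s0}(a) + f_{s1}(a) = f_s(a) for all a ∈ X and all s with |s| < p. -/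

import Mathlib

attribute [local instance] Classical.propDecidable

open Finset

lemma card_sigma_fiber {κ : Type*} [Fintype κ] (n : κ → ℕ) (P : κ → Prop) [DecidablePred P] :
    Fintype.card {w : Σ k : κ, Fin (n k) // P w.1} = ∑ k ∈ univ.filter P, n k := by
  classical
  rw [Fintype.card_subtype, Finset.card_filter, ← Finset.univ_sigma_univ,
    Finset.sum_sigma, Finset.sum_filter]
  refine Finset.sum_congr rfl fun k _ => ?_
  by_cases h : P k <;> simp [h]
lemma refine_count {X ι κ : Type*} [Fintype X] [DecidableEq ι] [DecidableEq κ] (g : X → ι) (T : Finset ι)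
    (hg : ∀ a, g a ∈ T) (K : Finset κ) (π : κ → ι) (n : κ → ℕ)
    (hπ : ∀ k ∈ K, π k ∈ T)
    (hcount : ∀ i ∈ T, (Finset.univ.filter fun a => g a = i).card
       = ∑ k ∈ K.filter (fun k => π k = i), n k) :
    ∃ h : X → κ, (∀ a, h a ∈ K ∧ π (h a) = g a) ∧
      ∀ k ∈ K, (Finset.univ.filter fun a => h a = k).card = n k := by
  classical
  set W := Σ k : {k // k ∈ K}, Fin (n k.1) with hW
  set φ : W → ι := fun w => π w.1.1 with hφ
  have claimA : ∀ i, Fintype.card {w : W // φ w = i}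
      = ∑ k ∈ K.filter (fun k => π k = i), n k := by
    intro i
    rw [card_sigma_fiber (fun k : {k // k ∈ K} => n k.1) (fun k => π k.1 = i)]
    rw [Finset.sum_filter, Finset.sum_filter,
      ← Finset.sum_coe_sort K (fun k => if π k = i then n k else 0)]
  have claimB : ∀ i, Fintype.card {a : X // g a = i} = Fintype.card {w : W // φ w = i} := by
    intro i
    by_cases hi : i ∈ T
    · rw [claimA i, Fintype.card_subtype, hcount i hi]
    · rw [Fintype.card_eq_zero_iff.2, Fintype.card_eq_zero_iff.2]
      · exact ⟨fun w => hi (w.2 ▸ hπ w.1.1.1 w.1.1.2)⟩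
      · exact ⟨fun a => hi (a.2 ▸ hg a.1)⟩
  let e : X ≃ W :=
    (Equiv.sigmaFiberEquiv g).symm.trans
      ((Equiv.sigmaCongrRight fun i => Fintype.equivOfCardEq (claimB i)).trans
        (Equiv.sigmaFiberEquiv φ))
  have he : ∀ a, φ (e a) = g a := by
    intro a
    show φ ((Equiv.sigmaFiberEquiv φ) _) = g a
    simp only [Equiv.sigmaFiberEquiv]
    exact ((Fintype.equivOfCardEq (claimB (g a))) ⟨a, rfl⟩).2
  refine ⟨fun a => (e a).1.1, fun a => ⟨(e a).1.2, he a⟩, fun k hk => ?_⟩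
  rw [← Fintype.card_subtype]
  have e2 : {a : X // (e a).1.1 = k} ≃ {w : W // w.1.1 = k} :=
    (e.subtypeEquiv fun a => by simp)
  rw [Fintype.card_congr e2, card_sigma_fiber (fun k : {k // k ∈ K} => n k.1)
    (fun k' => k'.1 = k)]
  have : univ.filter (fun k' : {k // k ∈ K} => k'.1 = k) = {⟨k, hk⟩} := by
    ext k'; simp [Subtype.ext_iff]
  rw [this, Finset.sum_singleton]
lemma split_step {X : Type*} [Fintype X] {m : ℕ} (C : Fin m → ℕ)
    (ys y0 y1 : (Fin m → ℕ) → ℕ) (yh : (Fin m → ℕ) → (Fin m → ℕ) → ℕ)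
    (H1 : ∀ u ∈ Finset.Icc 0 C, ys u = ∑ v ∈ Finset.Icc 0 C, ∑ w ∈ Finset.Icc 0 C,
        if v + w = u then yh v w else 0)
    (H2 : ∀ v ∈ Finset.Icc 0 C, y0 v = ∑ w ∈ Finset.Icc 0 C, if v + w ≤ C then yh v w else 0)
    (H3 : ∀ w ∈ Finset.Icc 0 C, y1 w = ∑ v ∈ Finset.Icc 0 C, if v + w ≤ C then yh v w else 0)
    (g : X → (Fin m → ℕ)) (hg : ∀ a, g a ∈ Finset.Icc 0 C)
    (hgc : ∀ u ∈ Finset.Icc 0 C, (Finset.univ.filter fun a => g a = u).card = ys u) :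
    ∃ h : X → (Fin m → ℕ) × (Fin m → ℕ),
      (∀ a, (h a).1 ∈ Finset.Icc 0 C ∧ (h a).2 ∈ Finset.Icc 0 C ∧ (h a).1 + (h a).2 = g a) ∧
      (∀ v ∈ Finset.Icc 0 C, (Finset.univ.filter fun a => (h a).1 = v).card = y0 v) ∧
      (∀ w ∈ Finset.Icc 0 C, (Finset.univ.filter fun a => (h a).2 = w).card = y1 w) := by
  classical
  set K := (Finset.Icc 0 C ×ˢ Finset.Icc 0 C).filter (fun q => q.1 + q.2 ≤ C) with hK
  have memK : ∀ q, q ∈ K ↔ (q.1 ∈ Finset.Icc 0 C ∧ q.2 ∈ Finset.Icc 0 C ∧ q.1 + q.2 ≤ C) := by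
    intro q; simp [hK, Finset.mem_product, and_assoc]
  obtain ⟨h, hmem, hcnt⟩ := refine_count g (Finset.Icc 0 C) hg K (fun q => q.1 + q.2)
      (fun q => yh q.1 q.2)
      (fun k hk => Finset.mem_Icc.2 ⟨zero_le, ((memK k).1 hk).2.2⟩)
      (by
        intro u hu
        rw [hgc u hu, H1 u hu]
        have hfu : K.filter (fun k => k.1 + k.2 = u)
            = (Finset.Icc 0 C ×ˢ Finset.Icc 0 C).filter (fun k => k.1 + k.2 = u) := by
          rw [hK, Finset.filter_filter]
          apply Finset.filter_congr
          intro k _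
          constructor
          · exact fun hh => hh.2
          · exact fun hh => ⟨hh ▸ (Finset.mem_Icc.1 hu).2, hh⟩
        rw [hfu, Finset.sum_filter, Finset.sum_product])
  refine ⟨h, fun a => ?_, fun v hv => ?_, fun w hw => ?_⟩
  · obtain ⟨h1, h2, h3⟩ := (memK (h a)).1 (hmem a).1
    exact ⟨h1, h2, (hmem a).2⟩
  · have key : (Finset.univ.filter fun a : X => (h a).1 = v).card
        = ∑ k ∈ K, (if k.1 = v then yh k.1 k.2 else 0) := by
      rw [Finset.card_eq_sum_card_fiberwise
        (f := h) (t := K) (fun a _ => (hmem a).1)]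
      refine Finset.sum_congr rfl fun k hk => ?_
      by_cases hkv : k.1 = v
      · rw [if_pos hkv, ← hcnt k hk]
        congr 1
        ext a
        simp only [Finset.mem_filter, Finset.mem_univ, true_and]
        exact ⟨fun hh => hh.2, fun hh => ⟨hh ▸ hkv, hh⟩⟩
      · rw [if_neg hkv, Finset.card_eq_zero]
        ext a
        simp only [Finset.mem_filter, Finset.mem_univ, true_and, Finset.notMem_empty,
          iff_false, not_and]
        intro h1 h2
        exact hkv (h2 ▸ h1)
    rw [key, H2 v hv, hK, Finset.sum_filter, Finset.sum_product]
    have swap : ∀ x yy : Fin m → ℕ, (if x + yy ≤ C then if x = v then yh x yy else 0 else 0)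
        = (if x = v then (if v + yy ≤ C then yh v yy else 0) else 0) := by
      intro x yy
      by_cases hx : x = v
      · subst hx; simp
      · simp [hx]
    simp only [swap]
    rw [Finset.sum_comm]
    refine Finset.sum_congr rfl fun w _ => ?_
    rw [Finset.sum_ite_eq' (Finset.Icc 0 C) v (fun _ => if v + w ≤ C then yh v w else 0),
      if_pos hv]
  · have key : (Finset.univ.filter fun a : X => (h a).2 = w).card
        = ∑ k ∈ K, (if k.2 = w then yh k.1 k.2 else 0) := by
      rw [Finset.card_eq_sum_card_fiberwise
        (f := h) (t := K) (fun a _ => (hmem a).1)]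
      refine Finset.sum_congr rfl fun k hk => ?_
      by_cases hkw : k.2 = w
      · rw [if_pos hkw, ← hcnt k hk]
        congr 1
        ext a
        simp only [Finset.mem_filter, Finset.mem_univ, true_and]
        exact ⟨fun hh => hh.2, fun hh => ⟨hh ▸ hkw, hh⟩⟩
      · rw [if_neg hkw, Finset.card_eq_zero]
        ext a
        simp only [Finset.mem_filter, Finset.mem_univ, true_and, Finset.notMem_empty,
          iff_false, not_and]
        intro h1 h2
        exact hkw (h2 ▸ h1)
    rw [key, H3 w hw, hK, Finset.sum_filter, Finset.sum_product]
    have swap : ∀ x yy : Fin m → ℕ, (if x + yy ≤ C then if yy = w then yh x yy else 0 else 0)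
        = (if yy = w then (if x + w ≤ C then yh x w else 0) else 0) := by
      intro x yy
      by_cases hx : yy = w
      · subst hx; simp
      · simp [hx]
    simp only [swap]
    refine Finset.sum_congr rfl fun x _ => ?_
    rw [Finset.sum_ite_eq' (Finset.Icc 0 C) w (fun _ => if x + w ≤ C then yh x w else 0),
      if_pos hw]


/-- **Realization of consistent spectrum counts** (cf. Lemma `tech_lem`).  Given
counting data `y s u` (how many elements should have spectrum `u` at tree node `s`)
and `ŷ s v w` (how many elements at node `s` should split their spectrum into `v` at
child `s0` and `w` at child `s1`), consistent in the stated sense, there is an actual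
assignment `f` of spectra to the elements of `X` realizing all the counts and additive
along the binary tree. -/
theorem spectrum_realization {X : Type*} [Fintype X] (m p : ℕ) (C : Fin m → ℕ)
    (y : List Bool → (Fin m → ℕ) → ℕ)
    (yhat : List Bool → (Fin m → ℕ) → (Fin m → ℕ) → ℕ)
    (h0 : Fintype.card X = ∑ u ∈ Finset.Icc 0 C, y [] u)
    (h1 : ∀ s : List Bool, s.length < p → ∀ u ∈ Finset.Icc 0 C,
      y s u = ∑ v ∈ Finset.Icc 0 C, ∑ w ∈ Finset.Icc 0 C,
        if v + w = u then yhat s v w else 0)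
    (h2 : ∀ s : List Bool, s.length < p → ∀ v ∈ Finset.Icc 0 C,
      y (s ++ [false]) v = ∑ w ∈ Finset.Icc 0 C, if v + w ≤ C then yhat s v w else 0)
    (h3 : ∀ s : List Bool, s.length < p → ∀ w ∈ Finset.Icc 0 C,
      y (s ++ [true]) w = ∑ v ∈ Finset.Icc 0 C, if v + w ≤ C then yhat s v w else 0) :
    ∃ f : List Bool → X → (Fin m → ℕ),
      (∀ (s : List Bool) (a : X), s.length ≤ p → f s a ≤ C) ∧
      (∀ s : List Bool, s.length ≤ p → ∀ u ∈ Finset.Icc 0 C,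
        (Finset.univ.filter (fun a : X => f s a = u)).card = y s u) ∧
      (∀ (a : X) (s : List Bool), s.length < p →
        f (s ++ [false]) a + f (s ++ [true]) a = f s a) := by
  classical
  -- base assignment at the root
  have base : ∃ f0 : X → (Fin m → ℕ), (∀ a, f0 a ∈ Finset.Icc 0 C) ∧
      (∀ u ∈ Finset.Icc 0 C, (Finset.univ.filter fun a => f0 a = u).card = y [] u) := by
    obtain ⟨h, hmem, hcnt⟩ := refine_count (fun _ : X => ()) ({()} : Finset Unit)
      (fun _ => Finset.mem_singleton_self _) (Finset.Icc 0 C) (fun _ => ()) (y [])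
      (fun _ _ => Finset.mem_singleton_self _)
      (by
        intro i _
        simp only [eq_iff_true_of_subsingleton, Finset.filter_true, Finset.card_univ]
        rw [h0])
    exact ⟨h, fun a => (hmem a).1, hcnt⟩
  have key : ∀ q : ℕ, q ≤ p → ∃ f : List Bool → X → (Fin m → ℕ),
      (∀ (s : List Bool) (a : X), s.length ≤ q → f s a ∈ Finset.Icc 0 C) ∧
      (∀ s : List Bool, s.length ≤ q → ∀ u ∈ Finset.Icc 0 C,
        (Finset.univ.filter (fun a : X => f s a = u)).card = y s u) ∧
      (∀ (a : X) (s : List Bool), s.length < q →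
        f (s ++ [false]) a + f (s ++ [true]) a = f s a) := by
    intro q
    induction q with
    | zero =>
      intro _
      obtain ⟨f0, hf0, hf0c⟩ := base
      refine ⟨fun _ => f0, fun s a _ => hf0 a, fun s hs u hu => ?_,
        fun a s hs => absurd hs (by omega)⟩
      have hse : s = [] := List.length_eq_zero_iff.1 (Nat.le_zero.1 hs)
      subst hse
      exact hf0c u hu
    | succ q ih =>
      intro hq
      obtain ⟨f, hfb, hfc, hfa⟩ := ih (Nat.le_of_succ_le hq)
      have hsplit : ∀ s : List Bool, s.length = q →
          ∃ h : X → (Fin m → ℕ) × (Fin m → ℕ),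
          (∀ a, (h a).1 ∈ Finset.Icc 0 C ∧ (h a).2 ∈ Finset.Icc 0 C ∧
            (h a).1 + (h a).2 = f s a) ∧
          (∀ v ∈ Finset.Icc 0 C,
            (Finset.univ.filter fun a => (h a).1 = v).card = y (s ++ [false]) v) ∧
          (∀ w ∈ Finset.Icc 0 C,
            (Finset.univ.filter fun a => (h a).2 = w).card = y (s ++ [true]) w) := by
        intro s hs
        have hsp : s.length < p := by omega
        exact split_step C (y s) (y (s ++ [false])) (y (s ++ [true])) (yhat s)
          (h1 s hsp) (h2 s hsp) (h3 s hsp) (f s)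
          (fun a => hfb s a (by omega)) (hfc s (by omega))
      choose H Hprop using hsplit
      set F : List Bool → X → (Fin m → ℕ) := fun t a =>
        if hl : t.length ≤ q then f t a
        else if hl' : t.length = q + 1 then
          (if t.getLastD false = false then
            (H t.dropLast (by simp [List.length_dropLast, hl']) a).1
          else (H t.dropLast (by simp [List.length_dropLast, hl']) a).2)
        else 0 with hF
      have hA : ∀ (t : List Bool) (a : X), t.length ≤ q → F t a = f t a := by
        intro t a ht
        simp only [hF]
        rw [dif_pos ht]
      have hB : ∀ (s : List Bool) (hs : s.length = q) (b : Bool) (a : X),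
          F (s ++ [b]) a = (if b = false then (H s hs a).1 else (H s hs a).2) := by
        intro s hs b a
        have hlen : (s ++ [b]).length = q + 1 := by simp [hs]
        simp only [hF]
        rw [dif_neg (by omega), dif_pos hlen]
        simp only [List.dropLast_concat, List.getLastD_concat]
      refine ⟨F, ?_, ?_, ?_⟩
      · intro s a hs
        by_cases hsq : s.length ≤ q
        · rw [hA s a hsq]; exact hfb s a hsq
        · rcases s.eq_nil_or_concat with rfl | ⟨s', b, hsb⟩
          · exact absurd (Nat.zero_le q) hsq
          · rw [List.concat_eq_append] at hsb
            subst hsb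
            have hs' : s'.length = q := by
              simp only [List.length_append, List.length_cons, List.length_nil] at hs hsq
              omega
            rw [hB s' hs' b a]
            cases b
            · rw [if_pos rfl]; exact ((Hprop s' hs').1 a).1
            · rw [if_neg (by simp)]; exact ((Hprop s' hs').1 a).2.1
      · intro s hs u hu
        by_cases hsq : s.length ≤ q
        · rw [show (Finset.univ.filter fun a : X => F s a = u)
              = Finset.univ.filter fun a : X => f s a = u from
            Finset.filter_congr fun a _ => by rw [hA s a hsq]]
          exact hfc s hsq u hu
        · rcases s.eq_nil_or_concat with rfl | ⟨s', b, hsb⟩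
          · exact absurd (Nat.zero_le q) hsq
          · rw [List.concat_eq_append] at hsb
            subst hsb
            have hs' : s'.length = q := by
              simp only [List.length_append, List.length_cons, List.length_nil] at hs hsq
              omega
            cases b
            · rw [show (Finset.univ.filter fun a : X => F (s' ++ [false]) a = u)
                  = Finset.univ.filter fun a : X => (H s' hs' a).1 = u from
                Finset.filter_congr fun a _ => by rw [hB s' hs' false a, if_pos rfl]]
              exact (Hprop s' hs').2.1 u hu
            · rw [show (Finset.univ.filter fun a : X => F (s' ++ [true]) a = u)
                  = Finset.univ.filter fun a : X => (H s' hs' a).2 = u from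
                Finset.filter_congr fun a _ => by
                  rw [hB s' hs' true a, if_neg (by simp)]]
              exact (Hprop s' hs').2.2 u hu
      · intro a s hs
        by_cases hsq : s.length < q
        · rw [hA (s ++ [false]) a (by simp; omega), hA (s ++ [true]) a (by simp; omega),
            hA s a (by omega)]
          exact hfa a s hsq
        · have hs' : s.length = q := by omega
          rw [hB s hs' false a, hB s hs' true a, hA s a (le_of_eq hs'),
            if_pos rfl, if_neg (by simp)]
          exact ((Hprop s hs').1 a).2.2
  obtain ⟨f, hb, hc, ha⟩ := key p le_rfl
  exact ⟨f, fun s a hs => (Finset.mem_Icc.1 (hb s a hs)).2, hc, ha⟩
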